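/- Let (S, R) be a bipartition of V_A and (S', R') be a bipartition of V_B, and suppose q_S ≥ p_{S'}. Then for every v ∈ S ∪ S' one has |N_{S ∪ S'}(v)| ≥ |N_{V ∖ (S ∪ S')}(v)|, and for every v ∈ V ∖ (S ∪ S') one has |N_{V ∖ (S ∪ S')}(v)| ≥ |N_{S ∪ S'}(v)|. -/

import Mathlib

open Finset

variable {V : Type*} [Fintype V] [DecidableEq V]

/-- `nbr G A v = |N_A(v)|`, the number of neighbors of `v` lying in `A`. -/
def nbr (G : SimpleGraph V) [DecidableRel G.Adj] (A : Finset V) (v : V) : ℕ :=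
  (G.neighborFinset v ∩ A).card

/-- The query vector `q_S` (2 entries per vertex) associated to a bipartition `(S, R)` of `V_A`;
vertices outside `S ∪ R` are exactly those of `V_B`. -/
def qvec (G : SimpleGraph V) [DecidableRel G.Adj] (n : ℕ) (S R : Finset V) (v : V) :
    Fin 2 → ℤ :=
  if v ∈ S then ![(nbr G S v : ℤ) - (nbr G R v : ℤ), (n : ℤ)]
  else if v ∈ R then ![(n : ℤ), (nbr G R v : ℤ) - (nbr G S v : ℤ)]
  else ![(nbr G S v : ℤ) - (nbr G R v : ℤ), (nbr G R v : ℤ) - (nbr G S v : ℤ)]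

/-- The data vector `p_{S'}` (2 entries per vertex) associated to a bipartition `(S', R')`
of `V_B`; vertices outside `S' ∪ R'` are exactly those of `V_A`. -/
def pvec (G : SimpleGraph V) [DecidableRel G.Adj] (n : ℕ) (S' R' : Finset V) (v : V) :
    Fin 2 → ℤ :=
  if v ∈ S' then ![(nbr G R' v : ℤ) - (nbr G S' v : ℤ), -(n : ℤ)]
  else if v ∈ R' then ![-(n : ℤ), (nbr G S' v : ℤ) - (nbr G R' v : ℤ)]
  else ![(nbr G R' v : ℤ) - (nbr G S' v : ℤ), (nbr G S' v : ℤ) - (nbr G R' v : ℤ)]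

/-- An internal partition of `G`: a proper bipartition `(V_L, V_R)` of the vertex set such that
every vertex has at least as many neighbors in its own part as in the other part. -/
def IsInternalPartition (G : SimpleGraph V) [DecidableRel G.Adj] (VL VR : Finset V) : Prop :=
  Disjoint VL VR ∧ VL ∪ VR = Finset.univ ∧ VL.Nonempty ∧ VR.Nonempty ∧
    (∀ v ∈ VL, nbr G VR v ≤ nbr G VL v) ∧ (∀ v ∈ VR, nbr G VL v ≤ nbr G VR v)


lemma nbr_union (G : SimpleGraph V) [DecidableRel G.Adj] {A B : Finset V} (h : Disjoint A B)
    (v : V) : nbr G (A ∪ B) v = nbr G A v + nbr G B v := by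
  unfold nbr
  rw [Finset.inter_union_distrib_left, Finset.card_union_of_disjoint]
  exact Finset.disjoint_of_subset_left Finset.inter_subset_right
    (Finset.disjoint_of_subset_right Finset.inter_subset_right h)

/-- if `(S, R)` is a bipartition of `V_A`, `(S', R')` is a bipartition of `V_B`,
and `q_S ≥ p_{S'}`, then every `v ∈ S ∪ S'` has at least as many neighbors in `S ∪ S'` as in
`V ∖ (S ∪ S')`, and every `v ∈ V ∖ (S ∪ S')` has at least as many neighbors in
`V ∖ (S ∪ S')` as in `S ∪ S'`. -/
theorem stmt_2 (G : SimpleGraph V) [DecidableRel G.Adj]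
    (n : ℕ) (hn : n = Fintype.card V)
    (VA VB : Finset V) (hABdisj : Disjoint VA VB) (hABuniv : VA ∪ VB = Finset.univ)
    (S R : Finset V) (hSR : Disjoint S R) (hSRu : S ∪ R = VA)
    (S' R' : Finset V) (hSR' : Disjoint S' R') (hSRu' : S' ∪ R' = VB)
    (hdom : ∀ v : V, ∀ k : Fin 2, pvec G n S' R' v k ≤ qvec G n S R v k) :
    (∀ v ∈ S ∪ S', nbr G (Finset.univ \ (S ∪ S')) v ≤ nbr G (S ∪ S') v) ∧
      (∀ v ∈ Finset.univ \ (S ∪ S'), nbr G (S ∪ S') v ≤ nbr G (Finset.univ \ (S ∪ S')) v) := by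
  
  have hSA : S ⊆ VA := hSRu ▸ Finset.subset_union_left
  have hRA : R ⊆ VA := hSRu ▸ Finset.subset_union_right
  have hSB : S' ⊆ VB := hSRu' ▸ Finset.subset_union_left
  have hRB : R' ⊆ VB := hSRu' ▸ Finset.subset_union_right
  have hSS' : Disjoint S S' := (hABdisj.mono hSA hSB)
  have hSR'2 : Disjoint S R' := (hABdisj.mono hSA hRB)
  have hRS' : Disjoint R S' := (hABdisj.mono hRA hSB)
  have hRR' : Disjoint R R' := (hABdisj.mono hRA hRB)
  have hdisj : Disjoint (S ∪ S') (R ∪ R') := by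
    simp only [Finset.disjoint_union_left, Finset.disjoint_union_right]
    exact ⟨⟨hSR, hRS'.symm⟩, hSR'2, hSR'⟩
  have hcompl : Finset.univ \ (S ∪ S') = R ∪ R' := by
    have huniv : (S ∪ S') ∪ (R ∪ R') = Finset.univ := by
      rw [← hABuniv, ← hSRu, ← hSRu']
      ac_rfl
    rw [← huniv, Finset.union_sdiff_cancel_left hdisj]
  have key : ∀ v : V,
      nbr G (R ∪ R') v = nbr G R v + nbr G R' v ∧
      nbr G (S ∪ S') v = nbr G S v + nbr G S' v := fun v =>
    ⟨nbr_union G hRR' v, nbr_union G hSS' v⟩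
  constructor
  · intro v hv
    rw [hcompl, (key v).1, (key v).2]
    rcases Finset.mem_union.1 hv with hvS | hvS'
    · have h1 : v ∉ S' := Finset.disjoint_left.1 hSS' hvS
      have h2 : v ∉ R' := Finset.disjoint_left.1 hSR'2 hvS
      have := hdom v 0
      simp only [pvec, qvec, if_pos hvS, if_neg h1, if_neg h2] at this
      simp only [Matrix.cons_val_zero] at this
      omega
    · have h1 : v ∉ S := Finset.disjoint_right.1 hSS' hvS'
      have h2 : v ∉ R := Finset.disjoint_right.1 hRS' hvS'
      have := hdom v 0
      simp only [pvec, qvec, if_pos hvS', if_neg h1, if_neg h2] at this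
      simp only [Matrix.cons_val_zero] at this
      omega
  · intro v hv
    rw [hcompl] at hv ⊢
    rw [(key v).1, (key v).2]
    rcases Finset.mem_union.1 hv with hvR | hvR'
    · have h1 : v ∉ S' := Finset.disjoint_left.1 hRS' hvR
      have h2 : v ∉ R' := Finset.disjoint_left.1 hRR' hvR
      have h3 : v ∉ S := Finset.disjoint_right.1 hSR hvR
      have := hdom v 1
      simp only [pvec, qvec, if_pos hvR, if_neg h1, if_neg h2, if_neg h3] at this
      simp only [Matrix.cons_val_one, Matrix.head_cons, Matrix.cons_val_zero] at this
      omega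
    · have h1 : v ∉ S := Finset.disjoint_right.1 hSR'2 hvR'
      have h2 : v ∉ R := Finset.disjoint_right.1 hRR' hvR'
      have h3 : v ∉ S' := Finset.disjoint_right.1 hSR' hvR'
      have := hdom v 1
      simp only [pvec, qvec, if_pos hvR', if_neg h1, if_neg h2, if_neg h3] at this
      simp only [Matrix.cons_val_one, Matrix.head_cons, Matrix.cons_val_zero] at this
      omega
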